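/- Let (Y_k)_{k≥0} be a sequence of nonnegative random variables on a probability space (for instance Y_k = F(Φ(k)) for a nonnegative measurable function F and a stochastic process Φ with a fixed initial condition), and set S_n := Σ_{k=0}^{n-1} Y_k. Then the following are equivalent: (i) there exists c₀ > 0 such that limsup_{n→∞} n⁻¹ log P{S_n ≥ n c₀} < 0; (ii) there exists θ₀ > 0 such that limsup_{n→∞} n⁻¹ log E[exp(θ₀ S_n)] < ∞. -/

import Mathlib

open MeasureTheory ProbabilityTheory Filter
open scoped ENNReal

lemma aux_le_log {a : ℝ≥0∞} {n : ℕ} (hn : 1 ≤ n) {K : ℝ}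
    (h : a ≤ ENNReal.ofReal (Real.exp (n * K))) :
    (((n : ℝ)⁻¹ : ℝ) : EReal) * ENNReal.log a ≤ (K : EReal) := by
  have hn' : (0:ℝ) < n := by exact_mod_cast hn
  have h1 : ENNReal.log a ≤ ((n * K : ℝ) : EReal) := by
    calc ENNReal.log a ≤ ENNReal.log (ENNReal.ofReal (Real.exp (n * K))) :=
          ENNReal.log_monotone h
      _ = ((Real.log (Real.exp (n * K)) : ℝ) : EReal) :=
          ENNReal.log_ofReal_of_pos (Real.exp_pos _)
      _ = ((n * K : ℝ) : EReal) := by rw [Real.log_exp]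
  calc (((n : ℝ)⁻¹ : ℝ) : EReal) * ENNReal.log a
      ≤ (((n : ℝ)⁻¹ : ℝ) : EReal) * ((n * K : ℝ) : EReal) :=
        mul_le_mul_of_nonneg_left h1 (EReal.coe_nonneg.2 (by positivity))
    _ = (K : EReal) := by
        rw [← EReal.coe_mul]; congr 1; field_simp

lemma aux_log_le {a : ℝ≥0∞} {n : ℕ} (hn : 1 ≤ n) {K : ℝ}
    (h : (((n : ℝ)⁻¹ : ℝ) : EReal) * ENNReal.log a ≤ (K : EReal)) :
    a ≤ ENNReal.ofReal (Real.exp (n * K)) := by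
  have hn' : (0:ℝ) < n := by exact_mod_cast hn
  have h2 := mul_le_mul_of_nonneg_left h (EReal.coe_nonneg.2 hn'.le)
  rw [← mul_assoc, ← EReal.coe_mul, mul_inv_cancel₀ hn'.ne', EReal.coe_one, one_mul,
    ← EReal.coe_mul] at h2
  have h3 : ENNReal.log a ≤ ENNReal.log (ENNReal.ofReal (Real.exp (n * K))) := by
    rw [ENNReal.log_ofReal_of_pos (Real.exp_pos _), Real.log_exp]; exact h2
  exact ENNReal.log_le_log_iff.1 h3

theorem prop_2_12 {Ω : Type*} [MeasureSpace Ω] [IsProbabilityMeasure (ℙ : Measure Ω)]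
    (Y : ℕ → Ω → ℝ) (hYmeas : ∀ k, Measurable (Y k)) (hYnonneg : ∀ k ω, 0 ≤ Y k ω)
    (S : ℕ → Ω → ℝ) (hS : ∀ n ω, S n ω = ∑ k ∈ Finset.range n, Y k ω) :
    (∃ c₀ : ℝ, 0 < c₀ ∧
        limsup (fun n : ℕ => (((n : ℝ)⁻¹ : ℝ) : EReal) *
          ENNReal.log (ℙ {ω | (n : ℝ) * c₀ ≤ S n ω})) atTop < 0) ↔
      (∃ θ₀ : ℝ, 0 < θ₀ ∧
        limsup (fun n : ℕ => (((n : ℝ)⁻¹ : ℝ) : EReal) *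
          ENNReal.log (∫⁻ ω, ENNReal.ofReal (Real.exp (θ₀ * S n ω)))) atTop < ⊤) := by
  have hSmeas : ∀ n, Measurable (S n) := by
    intro n
    have : S n = fun ω => ∑ k ∈ Finset.range n, Y k ω := funext (hS n)
    rw [this]
    exact Finset.measurable_sum _ fun k _ => hYmeas k
  have hSnonneg : ∀ n ω, 0 ≤ S n ω := by
    intro n ω; rw [hS]; exact Finset.sum_nonneg fun k _ => hYnonneg k ω
  have hSmono : ∀ {n m : ℕ}, n ≤ m → ∀ ω, S n ω ≤ S m ω := by
    intro n m hnm ω; rw [hS, hS]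
    exact Finset.sum_le_sum_of_subset_of_nonneg (Finset.range_subset_range.2 hnm)
      fun k _ _ => hYnonneg k ω
  constructor
  · rintro ⟨c₀, hc₀, h⟩
    obtain ⟨α, hα1, hα2⟩ := EReal.exists_between_coe_real h
    have hα : α < 0 := by exact_mod_cast hα2
    have hev := eventually_lt_of_limsup_lt hα1
    rw [eventually_atTop] at hev
    obtain ⟨N, hN⟩ := hev
    set θ : ℝ := -α / (2 * c₀) with hθdef
    have hθ : 0 < θ := div_pos (neg_pos.2 hα) (by positivity)
    have hθc : θ * c₀ = -α / 2 := by rw [hθdef]; field_simp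
    refine ⟨θ, hθ, ?_⟩
    -- tail bound
    have htail : ∀ m : ℕ, N ≤ m → 1 ≤ m →
        ℙ {ω | (m : ℝ) * c₀ ≤ S m ω} ≤ ENNReal.ofReal (Real.exp (m * α)) :=
      fun m hm hm1 => aux_log_le hm1 (hN m hm).le
    have he1 : Real.exp (α / 2) < 1 := Real.exp_lt_one_iff.2 (by linarith)
    have he0 : (0:ℝ) < Real.exp (α / 2) := Real.exp_pos _
    set D : ℝ := Real.exp (θ * c₀) * (1 - Real.exp (α / 2))⁻¹ with hDdef
    have hD0 : 0 ≤ D := by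
      have : (0:ℝ) < 1 - Real.exp (α / 2) := by linarith
      positivity
    have hmain : ∀ n : ℕ, max N 1 ≤ n →
        (∫⁻ ω, ENNReal.ofReal (Real.exp (θ * S n ω))) ≤
          (n : ℝ≥0∞) * ENNReal.ofReal (Real.exp (θ * ((n : ℝ) * c₀))) +
            ENNReal.ofReal D := by
      intro n hn
      have hnN : N ≤ n := le_trans (le_max_left _ _) hn
      have hn1 : 1 ≤ n := le_trans (le_max_right _ _) hn
      have hTmeas : ∀ m : ℕ, MeasurableSet {ω | (m : ℝ) * c₀ ≤ S n ω} :=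
        fun m => measurableSet_le measurable_const (hSmeas n)
      have hpt : ∀ ω, ENNReal.ofReal (Real.exp (θ * S n ω)) ≤
          ∑' m : ℕ, Set.indicator {ω' | (m : ℝ) * c₀ ≤ S n ω'}
            (fun _ => ENNReal.ofReal (Real.exp (θ * (((m : ℝ) + 1) * c₀)))) ω := by
        intro ω
        set m₀ : ℕ := ⌊S n ω / c₀⌋₊ with hm₀
        have hmem : ω ∈ {ω' | (m₀ : ℝ) * c₀ ≤ S n ω'} := by
          have h1 : (m₀ : ℝ) ≤ S n ω / c₀ := Nat.floor_le (div_nonneg (hSnonneg n ω) hc₀.le)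
          simpa using (le_div_iff₀ hc₀).1 h1
        have hlt : S n ω ≤ ((m₀ : ℝ) + 1) * c₀ := by
          have h2 : S n ω / c₀ < (m₀ : ℝ) + 1 := Nat.lt_floor_add_one _
          exact ((div_lt_iff₀ hc₀).1 h2).le
        refine le_trans ?_ (ENNReal.le_tsum m₀)
        rw [Set.indicator_of_mem hmem]
        exact ENNReal.ofReal_le_ofReal (Real.exp_le_exp.2
          (mul_le_mul_of_nonneg_left hlt hθ.le))
      have hint : (∫⁻ ω, ENNReal.ofReal (Real.exp (θ * S n ω))) ≤
          ∑' m : ℕ, ENNReal.ofReal (Real.exp (θ * (((m : ℝ) + 1) * c₀))) *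
            ℙ {ω | (m : ℝ) * c₀ ≤ S n ω} := by
        calc (∫⁻ ω, ENNReal.ofReal (Real.exp (θ * S n ω)))
            ≤ ∫⁻ ω, ∑' m : ℕ, Set.indicator {ω' | (m : ℝ) * c₀ ≤ S n ω'}
              (fun _ => ENNReal.ofReal (Real.exp (θ * (((m : ℝ) + 1) * c₀)))) ω :=
              lintegral_mono hpt
          _ = ∑' m : ℕ, ∫⁻ ω, Set.indicator {ω' | (m : ℝ) * c₀ ≤ S n ω'}
              (fun _ => ENNReal.ofReal (Real.exp (θ * (((m : ℝ) + 1) * c₀)))) ω :=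
              lintegral_tsum fun m =>
                (measurable_const.indicator (hTmeas m)).aemeasurable
          _ = _ := by
              refine tsum_congr fun m => ?_
              rw [lintegral_indicator (hTmeas m), setLIntegral_const]
      set A : ℝ≥0∞ := ENNReal.ofReal (Real.exp (θ * ((n : ℝ) * c₀))) with hA
      have hterm : ∀ m : ℕ,
          ENNReal.ofReal (Real.exp (θ * (((m : ℝ) + 1) * c₀))) *
            ℙ {ω | (m : ℝ) * c₀ ≤ S n ω} ≤
          (if m < n then A else 0) + ENNReal.ofReal (Real.exp (θ * c₀)) *
            (ENNReal.ofReal (Real.exp (α / 2))) ^ m := by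
        intro m
        rcases lt_or_ge m n with hmn | hmn
        · rw [if_pos hmn]
          refine le_trans (le_trans ?_ le_self_add) le_rfl
          calc ENNReal.ofReal (Real.exp (θ * (((m : ℝ) + 1) * c₀))) *
              ℙ {ω | (m : ℝ) * c₀ ≤ S n ω}
              ≤ ENNReal.ofReal (Real.exp (θ * (((m : ℝ) + 1) * c₀))) * 1 :=
                mul_le_mul_right prob_le_one _
            _ = ENNReal.ofReal (Real.exp (θ * (((m : ℝ) + 1) * c₀))) := mul_one _
            _ ≤ A := by
                rw [hA]
                refine ENNReal.ofReal_le_ofReal (Real.exp_le_exp.2 ?_)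
                have hm' : (m : ℝ) + 1 ≤ (n : ℝ) := by exact_mod_cast hmn
                have := mul_le_mul_of_nonneg_right hm' hc₀.le
                nlinarith [hθ.le]
        · rw [if_neg (not_lt.2 hmn), zero_add]
          have h1 : ℙ {ω | (m : ℝ) * c₀ ≤ S n ω} ≤ ℙ {ω | (m : ℝ) * c₀ ≤ S m ω} :=
            measure_mono fun ω hω => le_trans hω (hSmono hmn ω)
          have h2 := htail m (hnN.trans hmn) (hn1.trans hmn)
          calc ENNReal.ofReal (Real.exp (θ * (((m : ℝ) + 1) * c₀))) *
              ℙ {ω | (m : ℝ) * c₀ ≤ S n ω}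
              ≤ ENNReal.ofReal (Real.exp (θ * (((m : ℝ) + 1) * c₀))) *
                ENNReal.ofReal (Real.exp ((m : ℝ) * α)) :=
                mul_le_mul_right (h1.trans h2) _
            _ = ENNReal.ofReal (Real.exp (θ * c₀) * Real.exp (α / 2) ^ m) := by
                rw [← ENNReal.ofReal_mul (Real.exp_pos _).le, ← Real.exp_add,
                  ← Real.exp_nat_mul, ← Real.exp_add]
                congr 1
                have : θ * (((m : ℝ) + 1) * c₀) + (m : ℝ) * α =
                    θ * c₀ + (m : ℝ) * (θ * c₀ + α) := by ring
                rw [this, hθc]; ring_nf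
            _ = ENNReal.ofReal (Real.exp (θ * c₀)) *
                (ENNReal.ofReal (Real.exp (α / 2))) ^ m := by
                rw [ENNReal.ofReal_mul (Real.exp_pos _).le,
                  ENNReal.ofReal_pow he0.le]
      calc (∫⁻ ω, ENNReal.ofReal (Real.exp (θ * S n ω)))
          ≤ ∑' m : ℕ, ENNReal.ofReal (Real.exp (θ * (((m : ℝ) + 1) * c₀))) *
            ℙ {ω | (m : ℝ) * c₀ ≤ S n ω} := hint
        _ ≤ ∑' m : ℕ, ((if m < n then A else 0) +
            ENNReal.ofReal (Real.exp (θ * c₀)) *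
              (ENNReal.ofReal (Real.exp (α / 2))) ^ m) :=
            ENNReal.tsum_le_tsum hterm
        _ = (∑' m : ℕ, if m < n then A else 0) +
            ∑' m : ℕ, ENNReal.ofReal (Real.exp (θ * c₀)) *
              (ENNReal.ofReal (Real.exp (α / 2))) ^ m := ENNReal.tsum_add
        _ = (n : ℝ≥0∞) * A + ENNReal.ofReal D := by
            congr 1
            · rw [tsum_eq_sum (s := Finset.range n)
                (fun m hm => if_neg (by simpa using hm))]
              rw [Finset.sum_congr rfl fun m hm =>
                if_pos (Finset.mem_range.1 hm)]
              rw [Finset.sum_const, Finset.card_range, nsmul_eq_mul]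
            · rw [ENNReal.tsum_mul_left, ENNReal.tsum_geometric, hDdef,
                ENNReal.ofReal_mul (Real.exp_pos _).le]
              congr 1
              rw [ENNReal.ofReal_inv_of_pos (by linarith),
                ENNReal.ofReal_sub _ he0.le, ENNReal.ofReal_one]
    have hfinal : ∀ᶠ n : ℕ in atTop, (((n : ℝ)⁻¹ : ℝ) : EReal) *
        ENNReal.log (∫⁻ ω, ENNReal.ofReal (Real.exp (θ * S n ω))) ≤
        ((θ * c₀ + 2 : ℝ) : EReal) := by
      filter_upwards [eventually_ge_atTop (max N 1), eventually_ge_atTop ⌈D⌉₊]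
        with n hn hnD
      have hn1 : 1 ≤ n := le_trans (le_max_right _ _) hn
      have hnR : (1:ℝ) ≤ n := by exact_mod_cast hn1
      have hexp : (n : ℝ) + 1 ≤ Real.exp n := Real.add_one_le_exp _
      have hA1 : (1:ℝ≥0∞) ≤ ENNReal.ofReal (Real.exp (θ * ((n : ℝ) * c₀))) :=
        ENNReal.one_le_ofReal.2 (Real.one_le_exp (by positivity))
      have hDn : D ≤ (n : ℝ) := le_trans (Nat.le_ceil D) (by exact_mod_cast hnD)
      apply aux_le_log hn1
      calc (∫⁻ ω, ENNReal.ofReal (Real.exp (θ * S n ω)))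
          ≤ (n : ℝ≥0∞) * ENNReal.ofReal (Real.exp (θ * ((n : ℝ) * c₀))) +
            ENNReal.ofReal D := hmain n hn
        _ ≤ ENNReal.ofReal (Real.exp n) *
              ENNReal.ofReal (Real.exp (θ * ((n : ℝ) * c₀))) +
            ENNReal.ofReal (Real.exp n) *
              ENNReal.ofReal (Real.exp (θ * ((n : ℝ) * c₀))) := by
            gcongr
            · rw [← ENNReal.ofReal_natCast]
              exact ENNReal.ofReal_le_ofReal (by linarith)
            · calc ENNReal.ofReal D ≤ ENNReal.ofReal (Real.exp n) :=
                  ENNReal.ofReal_le_ofReal (by linarith)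
                _ ≤ _ := le_mul_of_one_le_right (zero_le) hA1
        _ = 2 * (ENNReal.ofReal (Real.exp n) *
              ENNReal.ofReal (Real.exp (θ * ((n : ℝ) * c₀)))) := (two_mul _).symm
        _ ≤ ENNReal.ofReal (Real.exp n) * (ENNReal.ofReal (Real.exp n) *
              ENNReal.ofReal (Real.exp (θ * ((n : ℝ) * c₀)))) := by
            refine mul_le_mul_left ?_ _
            rw [show (2:ℝ≥0∞) = ENNReal.ofReal 2 by simp]
            exact ENNReal.ofReal_le_ofReal (by linarith)
        _ = ENNReal.ofReal (Real.exp ((n : ℝ) * (θ * c₀ + 2))) := by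
            rw [← ENNReal.ofReal_mul (Real.exp_pos _).le,
              ← ENNReal.ofReal_mul (Real.exp_pos _).le,
              ← Real.exp_add, ← Real.exp_add]
            congr 1; ring
    calc limsup (fun n : ℕ => (((n : ℝ)⁻¹ : ℝ) : EReal) *
          ENNReal.log (∫⁻ ω, ENNReal.ofReal (Real.exp (θ * S n ω)))) atTop
        ≤ ((θ * c₀ + 2 : ℝ) : EReal) := limsup_le_of_le (by isBoundedDefault) hfinal
      _ < ⊤ := EReal.coe_lt_top _

  · rintro ⟨θ₀, hθ₀, h⟩
    obtain ⟨M, hM1, _⟩ := EReal.exists_between_coe_real h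
    have hev := eventually_lt_of_limsup_lt hM1
    rw [eventually_atTop] at hev
    obtain ⟨N, hN⟩ := hev
    refine ⟨(|M| + 1) / θ₀, by positivity, ?_⟩
    set c₀ : ℝ := (|M| + 1) / θ₀ with hc₀def
    have hc₀ : θ₀ * c₀ = |M| + 1 := by rw [hc₀def]; field_simp
    have key : ∀ n : ℕ, N ≤ n → 1 ≤ n →
        ℙ {ω | (n : ℝ) * c₀ ≤ S n ω} ≤ ENNReal.ofReal (Real.exp (n * (-1 : ℝ))) := by
      intro n hn hn1
      have hL : (∫⁻ ω, ENNReal.ofReal (Real.exp (θ₀ * S n ω))) ≤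
          ENNReal.ofReal (Real.exp (n * M)) := aux_log_le hn1 (hN n hn).le
      set ε : ℝ≥0∞ := ENNReal.ofReal (Real.exp (θ₀ * ((n : ℝ) * c₀))) with hεdef
      have hεne : ε ≠ 0 := by
        simp [hεdef, ENNReal.ofReal_eq_zero, not_le, Real.exp_pos]
      have hεtop : ε ≠ ⊤ := ENNReal.ofReal_ne_top
      have hsub : {ω | (n : ℝ) * c₀ ≤ S n ω} ⊆
          {ω | ε ≤ ENNReal.ofReal (Real.exp (θ₀ * S n ω))} := by
        intro ω hω
        exact ENNReal.ofReal_le_ofReal (Real.exp_le_exp.2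
          (mul_le_mul_of_nonneg_left hω hθ₀.le))
      have hmark : ε * ℙ {ω | (n : ℝ) * c₀ ≤ S n ω} ≤
          ∫⁻ ω, ENNReal.ofReal (Real.exp (θ₀ * S n ω)) := by
        calc ε * ℙ {ω | (n : ℝ) * c₀ ≤ S n ω}
            ≤ ε * ℙ {ω | ε ≤ ENNReal.ofReal (Real.exp (θ₀ * S n ω))} :=
              mul_le_mul_right (measure_mono hsub) ε
          _ ≤ _ := mul_meas_ge_le_lintegral₀
              (((hSmeas n).const_mul θ₀).exp.ennreal_ofReal.aemeasurable) ε
      have hfac : ENNReal.ofReal (Real.exp (n * M)) =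
          ε * ENNReal.ofReal (Real.exp ((n : ℝ) * (M - θ₀ * c₀))) := by
        rw [hεdef, ← ENNReal.ofReal_mul (Real.exp_pos _).le, ← Real.exp_add]
        congr 2; ring
      have hle : ℙ {ω | (n : ℝ) * c₀ ≤ S n ω} ≤
          ENNReal.ofReal (Real.exp ((n : ℝ) * (M - θ₀ * c₀))) := by
        rw [← ENNReal.mul_le_mul_iff_right hεne hεtop, ← hfac]
        exact hmark.trans hL
      refine hle.trans (ENNReal.ofReal_le_ofReal (Real.exp_le_exp.2 ?_))
      have : M - θ₀ * c₀ ≤ -1 := by rw [hc₀]; have := le_abs_self M; linarith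
      have hn' : (0:ℝ) ≤ n := Nat.cast_nonneg n
      nlinarith
    have hfinal : ∀ᶠ n : ℕ in atTop, (((n : ℝ)⁻¹ : ℝ) : EReal) *
        ENNReal.log (ℙ {ω | (n : ℝ) * c₀ ≤ S n ω}) ≤ ((-1 : ℝ) : EReal) := by
      filter_upwards [eventually_ge_atTop N, eventually_ge_atTop 1] with n hn hn1
      exact aux_le_log hn1 (key n hn hn1)
    calc limsup _ atTop ≤ ((-1 : ℝ) : EReal) := limsup_le_of_le (by isBoundedDefault) hfinal
      _ < 0 := by exact_mod_cast (by norm_num : (-1:ℝ) < 0)
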